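/- Let A, B, C be {0,1}-valued random variables on a common probability space, let 0 < ξ < 1 and δ > 0, and suppose: (i) P(A = 1, B = 0) = P(B = 1, C = 0); (ii) |P(A = 1, C = 1) − P(A = 1)·P(C = 1)| ≤ δ (δ-independence of A and C); (iii) P(C = 1) = P(A = 1); (iv) ξ < P(A = 1) < 1 − ξ; and (v) δ ≤ ξ³. Then P(A = 1, B = 0) ≥ ξ²(1 − ξ)/2. -/
import Mathlib


open MeasureTheory

/-- For `{0,1}`-valued random variables `A`, `B`, `C` with
`P(A=1,B=0) = P(B=1,C=0)`, `A` and `C` δ-independent, `P(C=1) = P(A=1)`,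
`ξ < P(A=1) < 1 - ξ` and `δ ≤ ξ³`, one has `P(A=1,B=0) ≥ ξ²(1-ξ)/2`. -/
theorem polarization_difference_step_lower_bound
    {Ω : Type*} [MeasurableSpace Ω] (P : Measure Ω) [IsProbabilityMeasure P]
    (A B C : Ω → ZMod 2)
    (hA : Measurable A) (hB : Measurable B) (hC : Measurable C)
    (ξ δ : ℝ) (hξ0 : 0 < ξ) (hξ1 : ξ < 1) (hδ : 0 < δ)
    (h1 : (P {ω | A ω = 1 ∧ B ω = 0}).toReal = (P {ω | B ω = 1 ∧ C ω = 0}).toReal)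
    (h2 : |(P {ω | A ω = 1 ∧ C ω = 1}).toReal
        - (P {ω | A ω = 1}).toReal * (P {ω | C ω = 1}).toReal| ≤ δ)
    (h3 : (P {ω | C ω = 1}).toReal = (P {ω | A ω = 1}).toReal)
    (h4 : ξ < (P {ω | A ω = 1}).toReal)
    (h5 : (P {ω | A ω = 1}).toReal < 1 - ξ)
    (h6 : δ ≤ ξ ^ 3) :
    ξ ^ 2 * (1 - ξ) / 2 ≤ (P {ω | A ω = 1 ∧ B ω = 0}).toReal := by
  have hZ : ∀ x : ZMod 2, x = 0 ∨ x = 1 := by decide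
  -- split P(A=1) = P(A=1,C=1) + P(A=1,C=0)
  have hsplit : P {ω | A ω = 1} =
      P {ω | A ω = 1 ∧ C ω = 1} + P {ω | A ω = 1 ∧ C ω = 0} := by
    have hdisj : Disjoint {ω | A ω = 1 ∧ C ω = 1} {ω | A ω = 1 ∧ C ω = 0} := by
      rw [Set.disjoint_left]
      rintro ω ⟨_, h⟩ ⟨_, h'⟩
      simp [h'] at h
    have hm : MeasurableSet {ω | A ω = 1 ∧ C ω = 0} := by
      have : {ω | A ω = 1 ∧ C ω = 0} = A ⁻¹' {1} ∩ C ⁻¹' {0} := by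
        ext ω; simp [Set.mem_setOf_eq]
      rw [this]
      exact (hA (measurableSet_singleton 1)).inter (hC (measurableSet_singleton 0))
    rw [← measure_union hdisj hm]
    congr 1
    ext ω
    simp only [Set.mem_setOf_eq, Set.mem_union]
    constructor
    · intro h; rcases hZ (C ω) with h' | h'
      · exact Or.inr ⟨h, h'⟩
      · exact Or.inl ⟨h, h'⟩
    · rintro (⟨h, _⟩ | ⟨h, _⟩) <;> exact h
  -- union bound: P(A=1,C=0) ≤ P(A=1,B=0) + P(B=1,C=0)
  have hsub : {ω | A ω = 1 ∧ C ω = 0} ⊆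
      {ω | A ω = 1 ∧ B ω = 0} ∪ {ω | B ω = 1 ∧ C ω = 0} := by
    rintro ω ⟨hAω, hCω⟩
    rcases hZ (B ω) with h | h
    · exact Or.inl ⟨hAω, h⟩
    · exact Or.inr ⟨h, hCω⟩
  have hub : P {ω | A ω = 1 ∧ C ω = 0} ≤
      P {ω | A ω = 1 ∧ B ω = 0} + P {ω | B ω = 1 ∧ C ω = 0} :=
    le_trans (measure_mono hsub) (measure_union_le _ _)
  -- pass to real numbers
  have hne : ∀ s : Set Ω, P s ≠ ⊤ := fun s => measure_ne_top P s
  have hsplit' : (P {ω | A ω = 1}).toReal =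
      (P {ω | A ω = 1 ∧ C ω = 1}).toReal + (P {ω | A ω = 1 ∧ C ω = 0}).toReal := by
    rw [hsplit, ENNReal.toReal_add (hne _) (hne _)]
  have hub' : (P {ω | A ω = 1 ∧ C ω = 0}).toReal ≤
      (P {ω | A ω = 1 ∧ B ω = 0}).toReal + (P {ω | B ω = 1 ∧ C ω = 0}).toReal := by
    have := ENNReal.toReal_mono (by simp [hne]) hub
    rwa [ENNReal.toReal_add (hne _) (hne _)] at this
  rw [h3] at h2
  rw [abs_le] at h2
  set p := (P {ω | A ω = 1}).toReal
  nlinarith [h2.1, h2.2, sq_nonneg (p - ξ), sq_nonneg (1 - ξ - p),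
    mul_pos hξ0 (sub_pos.mpr hξ1)]
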